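/- Let (a_1,b_1),...,(a_k,b_k) be i.i.d. pairs of random vectors in R^d x R^d such that E[a b^T] exists, and let A, B be the k x d matrices whose i-th rows are a_i^T and b_i^T respectively. Then E[det(A^T B)] = d! * binom(k,d) * det(E[a b^T]). -/

import Mathlib

open MeasureTheory Matrix

private lemma intg_pi_prod {E : Type*} [MeasurableSpace E] (μ : Measure E) [SigmaFinite μ]
    {ι : Type*} [Fintype ι] (f : ι → E → ℝ) (hf : ∀ i, Integrable (f i) μ) :
    Integrable (fun x : ι → E => ∏ i, f i (x i)) (Measure.pi fun _ => μ) := by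
  letI : MeasureSpace E := ⟨μ⟩
  exact Integrable.fintype_prod hf

private lemma int_pi_prod {E : Type*} [MeasurableSpace E] (μ : Measure E) [SigmaFinite μ]
    {ι : Type*} [Fintype ι] (f : ι → E → ℝ) :
    ∫ x : ι → E, ∏ i, f i (x i) ∂(Measure.pi fun _ => μ) = ∏ i, ∫ x, f i x ∂μ := by
  letI : MeasureSpace E := ⟨μ⟩
  exact integral_fintype_prod_eq_prod f

private lemma det_eq_sum_perm {d : ℕ} (M : Matrix (Fin d) (Fin d) ℝ) :
    M.det = ∑ σ : Equiv.Perm (Fin d), ((Equiv.Perm.sign σ : ℤ) : ℝ) * ∏ i, M i (σ i) := by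
  rw [← Matrix.det_transpose, Matrix.det_apply']
  simp [Matrix.transpose_apply]

private lemma key_int {d k : ℕ}
    (μ : Measure ((Fin d → ℝ) × (Fin d → ℝ))) [IsProbabilityMeasure μ]
    (hint : ∀ i j : Fin d, Integrable (fun p => p.1 i * p.2 j) μ)
    {f : Fin d → Fin k} (hf : Function.Injective f) (σ : Equiv.Perm (Fin d)) :
    Integrable (fun w : Fin k → (Fin d → ℝ) × (Fin d → ℝ) =>
        ∏ i, ((w (f i)).1 i * (w (f i)).2 (σ i))) (Measure.pi fun _ => μ) ∧
    ∫ w : Fin k → (Fin d → ℝ) × (Fin d → ℝ),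
        ∏ i, ((w (f i)).1 i * (w (f i)).2 (σ i)) ∂(Measure.pi fun _ => μ)
      = ∏ i, ∫ p, p.1 i * p.2 (σ i) ∂μ := by
  classical
  set G : Fin k → ((Fin d → ℝ) × (Fin d → ℝ)) → ℝ :=
    fun r p => ∏ i ∈ Finset.univ.filter (fun i => f i = r), (p.1 i * p.2 (σ i)) with hG
  have hfib : ∀ r, Finset.univ.filter (fun i : Fin d => f i = r) = ∅ ∨
      ∃ i, Finset.univ.filter (fun i : Fin d => f i = r) = {i} := by
    intro r
    rcases Finset.eq_empty_or_nonempty (Finset.univ.filter (fun i : Fin d => f i = r)) with h | ⟨i, hi⟩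
    · exact Or.inl h
    · refine Or.inr ⟨i, ?_⟩
      have hi' : f i = r := (Finset.mem_filter.mp hi).2
      ext j
      simp only [Finset.mem_filter, Finset.mem_univ, true_and, Finset.mem_singleton]
      constructor
      · intro hj; exact hf (hj.trans hi'.symm)
      · rintro rfl; exact hi'
  have hGint : ∀ r, Integrable (G r) μ := by
    intro r
    rcases hfib r with h | ⟨i, h⟩
    · simpa [hG, h] using (integrable_const (1:ℝ) (μ := μ))
    · simpa [hG, h] using hint i (σ i)
  have hGval : ∀ r, ∫ p, G r p ∂μ
      = ∏ i ∈ Finset.univ.filter (fun i => f i = r), ∫ p, p.1 i * p.2 (σ i) ∂μ := by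
    intro r
    rcases hfib r with h | ⟨i, h⟩ <;> simp [hG, h]
  have hprod : ∀ w : Fin k → (Fin d → ℝ) × (Fin d → ℝ),
      ∏ i, ((w (f i)).1 i * (w (f i)).2 (σ i)) = ∏ r, G r (w r) := by
    intro w
    rw [← Finset.prod_fiberwise_of_maps_to (g := f)
      (fun i _ => Finset.mem_univ (f i)) (fun i => (w (f i)).1 i * (w (f i)).2 (σ i))]
    refine Finset.prod_congr rfl fun r _ => Finset.prod_congr rfl fun i hi => ?_
    have : f i = r := (Finset.mem_filter.mp hi).2
    rw [this]
  constructor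
  · exact (intg_pi_prod μ G hGint).congr
      (Filter.Eventually.of_forall fun w => (hprod w).symm)
  · rw [integral_congr_ae (Filter.Eventually.of_forall hprod), int_pi_prod μ G]
    calc ∏ r, ∫ p, G r p ∂μ
        = ∏ r, ∏ i ∈ Finset.univ.filter (fun i => f i = r), ∫ p, p.1 i * p.2 (σ i) ∂μ := by
          exact Finset.prod_congr rfl fun r _ => hGval r
      _ = ∏ i, ∫ p, p.1 i * p.2 (σ i) ∂μ :=
          Finset.prod_fiberwise_of_maps_to (fun i _ => Finset.mem_univ (f i)) _

private lemma det_pointwise {d k : ℕ} (w : Fin k → (Fin d → ℝ) × (Fin d → ℝ)) :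
    ((Matrix.of fun i => (w i).1)ᵀ * Matrix.of fun i => (w i).2).det
      = ∑ f ∈ Finset.univ.filter (fun f : Fin d → Fin k => Function.Injective f),
          ∑ σ : Equiv.Perm (Fin d), ((Equiv.Perm.sign σ : ℤ) : ℝ) *
            ∏ i, ((w (f i)).1 i * (w (f i)).2 (σ i)) := by
  classical
  have hmat : ((Matrix.of fun i => (w i).1)ᵀ * Matrix.of fun i => (w i).2)
      = Matrix.of (fun i => ∑ r : Fin k, ((w r).1 i) • (w r).2) := by
    ext i j
    simp [Matrix.mul_apply, Finset.sum_apply]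
  rw [hmat]
  have h0 : (Matrix.of (fun i => ∑ r : Fin k, ((w r).1 i) • (w r).2)).det
      = (Matrix.detRowAlternating (R := ℝ) (n := Fin d)).toMultilinearMap
          (fun i => ∑ r : Fin k, ((w r).1 i) • (w r).2) := rfl
  rw [h0, MultilinearMap.map_sum]
  have h1 : ∀ f : Fin d → Fin k,
      (Matrix.detRowAlternating (R := ℝ) (n := Fin d)).toMultilinearMap
          (fun i => ((w (f i)).1 i) • (w (f i)).2)
        = (∏ i, (w (f i)).1 i) * (Matrix.of fun i j => (w (f i)).2 j).det := by
    intro f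
    rw [MultilinearMap.map_smul_univ]
    rfl
  simp_rw [h1]
  rw [← Finset.sum_filter_of_ne (p := fun f : Fin d → Fin k => Function.Injective f)]
  · refine Finset.sum_congr rfl fun f hf => ?_
    rw [det_eq_sum_perm, Finset.mul_sum]
    refine Finset.sum_congr rfl fun σ _ => ?_
    rw [Finset.prod_mul_distrib]
    simp only [Matrix.of_apply]
    ring
  · intro f _ hne
    by_contra hinj
    obtain ⟨i, j, hij, hne2⟩ := Function.not_injective_iff.mp hinj
    apply hne
    rw [Matrix.det_zero_of_row_eq hne2 (by ext c; simp [hij]), mul_zero]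

/-- Expected determinant of `AᵀB` for matrices with i.i.d. pairs of rows. -/
theorem stmt0 (d k : ℕ) (hd : 0 < d) (hdk : d ≤ k)
    (μ : Measure ((Fin d → ℝ) × (Fin d → ℝ))) [IsProbabilityMeasure μ]
    (hint : ∀ i j : Fin d, Integrable (fun p => p.1 i * p.2 j) μ) :
    ∫ w : Fin k → (Fin d → ℝ) × (Fin d → ℝ),
        ((Matrix.of fun i => (w i).1)ᵀ * Matrix.of fun i => (w i).2).det
      ∂(Measure.pi fun _ => μ)
    = (Nat.factorial d : ℝ) * (Nat.choose k d : ℝ) *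
        (Matrix.of fun i j => ∫ p, p.1 i * p.2 j ∂μ).det := by
  classical
  have hcard : (Finset.univ.filter (fun f : Fin d → Fin k => Function.Injective f)).card
      = Nat.descFactorial k d := by
    rw [← Fintype.card_subtype,
      Fintype.card_congr (Equiv.subtypeInjectiveEquivEmbedding (Fin d) (Fin k))]
    simp [Fintype.card_embedding_eq]
  rw [integral_congr_ae (Filter.Eventually.of_forall (fun w => det_pointwise w))]
  have hint1 : ∀ f ∈ Finset.univ.filter (fun f : Fin d → Fin k => Function.Injective f),
      Integrable (fun w : Fin k → (Fin d → ℝ) × (Fin d → ℝ) =>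
        ∑ σ : Equiv.Perm (Fin d), ((Equiv.Perm.sign σ : ℤ) : ℝ) *
          ∏ i, ((w (f i)).1 i * (w (f i)).2 (σ i))) (Measure.pi fun _ => μ) := by
    intro f hf
    have hfi : Function.Injective f := by simpa using hf
    exact integrable_finset_sum _ fun σ _ => ((key_int μ hint hfi σ).1).const_mul _
  rw [integral_finset_sum _ hint1]
  have hterm : ∀ f ∈ Finset.univ.filter (fun f : Fin d → Fin k => Function.Injective f),
      (∫ w : Fin k → (Fin d → ℝ) × (Fin d → ℝ),
          ∑ σ : Equiv.Perm (Fin d), ((Equiv.Perm.sign σ : ℤ) : ℝ) *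
            ∏ i, ((w (f i)).1 i * (w (f i)).2 (σ i)) ∂(Measure.pi fun _ => μ))
        = (Matrix.of fun i j => ∫ p, p.1 i * p.2 j ∂μ).det := by
    intro f hf
    have hfi : Function.Injective f := by simpa using hf
    rw [integral_finset_sum _ (fun σ _ => ((key_int μ hint hfi σ).1).const_mul _),
      det_eq_sum_perm]
    refine Finset.sum_congr rfl fun σ _ => ?_
    rw [integral_const_mul, (key_int μ hint hfi σ).2]
    rfl
  rw [Finset.sum_congr rfl hterm, Finset.sum_const, hcard, nsmul_eq_mul,
    Nat.descFactorial_eq_factorial_mul_choose]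
  push_cast
  ring
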